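/- arXiv:2505.14086 — 5 statements merged into one kernel-verified Lean document; each statement's English description precedes it below -/
import Mathlib

section
/- For all real ω, the Fourier transform of the hyperbolic secant satisfies ∫_{-∞}^{∞} sech(x) e^{-iωx} dx = π sech(πω/2). -/
open Real MeasureTheory Set

noncomputable def fsechPsi (t : ℝ) : ℝ := 1 / (1 + Real.exp (-2 * t))

lemma fsech_cpow_real {a : ℝ} (ha : 0 < a) (w : ℂ) :
    (a : ℂ) ^ w = Complex.exp ((Real.log a : ℂ) * w) := by
  rw [Complex.cpow_def_of_ne_zero (by exact_mod_cast ha.ne'), Complex.ofReal_log ha.le]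

lemma fsechPsi_hasDerivAt (t : ℝ) :
    HasDerivAt fsechPsi (2 * Real.exp (-2 * t) / (1 + Real.exp (-2 * t)) ^ 2) t := by
  have hE : (0:ℝ) < Real.exp (-2 * t) := Real.exp_pos _
  have h1 : HasDerivAt (fun t : ℝ => 1 + Real.exp (-2 * t)) (Real.exp (-2 * t) * (-2)) t := by
    have := (Real.hasDerivAt_exp (-2 * t)).comp t ((hasDerivAt_id t).const_mul (-2))
    simpa [mul_comm] using (this.const_add 1)
  have := h1.inv (by positivity)
  convert this using 1
  · rfl
  · rfl
  · ext x; simp [fsechPsi, one_div]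
  · field_simp

lemma fsechPsi_image : fsechPsi '' Set.univ = Set.Ioo 0 1 := by
  ext y
  simp only [Set.image_univ, Set.mem_range, Set.mem_Ioo]
  constructor
  · rintro ⟨t, rfl⟩
    have hE : (0:ℝ) < Real.exp (-2 * t) := Real.exp_pos _
    refine ⟨by rw [fsechPsi]; positivity, ?_⟩
    rw [fsechPsi, div_lt_one (by positivity)]; linarith
  · rintro ⟨hy0, hy1⟩
    refine ⟨-Real.log (1 / y - 1) / 2, ?_⟩
    have hpos : (0:ℝ) < 1 / y - 1 := by
      have : (1:ℝ) < 1 / y := by rw [lt_div_iff₀ hy0]; linarith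
      linarith
    have : Real.exp (-2 * (-Real.log (1 / y - 1) / 2)) = 1 / y - 1 := by
      rw [show -2 * (-Real.log (1 / y - 1) / 2) = Real.log (1 / y - 1) by ring,
        Real.exp_log hpos]
    rw [fsechPsi, this]
    field_simp
    ring

lemma fsechPsi_injOn : Set.InjOn fsechPsi Set.univ := by
  intro a _ b _ hab
  have hEa : (0:ℝ) < Real.exp (-2 * a) := Real.exp_pos _
  have hEb : (0:ℝ) < Real.exp (-2 * b) := Real.exp_pos _
  rw [fsechPsi, fsechPsi, div_eq_div_iff (by positivity) (by positivity)] at hab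
  have : Real.exp (-2 * a) = Real.exp (-2 * b) := by linarith
  have := Real.exp_injective this
  linarith

theorem fourier_sech (ω : ℝ) :
    ∫ x : ℝ, (1 / Real.cosh x : ℂ) * Complex.exp (-(Complex.I * ω * x)) =
      (π : ℂ) * (1 / Real.cosh (π * ω / 2)) := by
  set s : ℂ := (1 - Complex.I * ω) / 2 with hs
  have hres : s.re = 1 / 2 := by
    simp [hs, Complex.div_re, Complex.sub_re, Complex.mul_re]
  have hres' : (1 - s).re = 1 / 2 := by
    rw [Complex.sub_re, Complex.one_re, hres]; norm_num
  set g : ℝ → ℂ := fun x => (x : ℂ) ^ (s - 1) * (1 - (x : ℂ)) ^ (-s) with hg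
  -- Step A: substitution
  have subst := integral_image_eq_integral_abs_deriv_smul (MeasurableSet.univ)
    (fun t _ => (fsechPsi_hasDerivAt t).hasDerivWithinAt) fsechPsi_injOn g
  rw [fsechPsi_image, MeasureTheory.Measure.restrict_univ] at subst
  have hpt : ∀ t : ℝ,
      |2 * Real.exp (-2 * t) / (1 + Real.exp (-2 * t)) ^ 2| • g (fsechPsi t)
        = (1 / Real.cosh t : ℂ) * Complex.exp (-(Complex.I * ω * t)) := by
    intro t
    set E : ℝ := Real.exp (-2 * t) with hE
    have hEpos : (0:ℝ) < E := Real.exp_pos _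
    have h1E : (0:ℝ) < 1 + E := by linarith
    have habs : |2 * E / (1 + E) ^ 2| = 2 * E / (1 + E) ^ 2 := abs_of_pos (by positivity)
    have hψ : fsechPsi t = 1 / (1 + E) := rfl
    have h1ψ : (1 : ℂ) - ((1 / (1 + E) : ℝ) : ℂ) = ((E / (1 + E) : ℝ) : ℂ) := by
      have hne : (1 + (E:ℂ)) ≠ 0 := by exact_mod_cast h1E.ne'
      push_cast
      field_simp
      ring
    rw [habs]
    simp only [hψ, hg]
    rw [h1ψ]
    rw [fsech_cpow_real (by positivity) (s - 1), fsech_cpow_real (by positivity) (-s),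
      Complex.real_smul, ← Complex.exp_add]
    have hlog1 : Real.log (1 / (1 + E)) = -Real.log (1 + E) := by
      rw [one_div, Real.log_inv]
    have hlog2 : Real.log (E / (1 + E)) = -2 * t - Real.log (1 + E) := by
      rw [Real.log_div hEpos.ne' h1E.ne', hE, Real.log_exp]
    rw [hlog1, hlog2]
    set L : ℝ := Real.log (1 + E) with hL
    have hexp : ((-L : ℝ) : ℂ) * (s - 1) + ((-2 * t - L : ℝ) : ℂ) * (-s)
        = (L : ℂ) + (t : ℂ) - Complex.I * ω * t := by
      have : (s : ℂ) * 2 = 1 - Complex.I * ω := by rw [hs]; ring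
      push_cast
      rw [hs]
      ring
    rw [hexp]
    rw [show (L : ℂ) + (t : ℂ) - Complex.I * ω * t = ((L : ℂ) + (t : ℂ)) + -(Complex.I * ω * t) by ring,
      Complex.exp_add, show ((L:ℂ) + t) = ((L + t : ℝ) : ℂ) by push_cast; ring,
      ← Complex.ofReal_exp, Real.exp_add, Real.exp_log h1E]
    have hcosh : 2 * E / (1 + E) ^ 2 * ((1 + E) * Real.exp t) = 1 / Real.cosh t := by
      rw [Real.cosh_eq]
      have hEt : E * Real.exp t = Real.exp (-t) := by
        rw [hE, ← Real.exp_add]; ring_nf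
      have h2 : Real.exp (-t) = (Real.exp t)⁻¹ := Real.exp_neg t
      have h3 : E = (Real.exp t)⁻¹ ^ 2 := by
        rw [hE, ← Real.exp_neg, ← Real.exp_nat_mul]
        ring_nf
      rw [Real.exp_neg, h3]
      have het : (0:ℝ) < Real.exp t := Real.exp_pos t
      field_simp
    rw [← mul_assoc, ← Complex.ofReal_mul, hcosh]
    push_cast
    ring
  calc ∫ x : ℝ, (1 / Real.cosh x : ℂ) * Complex.exp (-(Complex.I * ω * x))
      = ∫ t : ℝ, |2 * Real.exp (-2 * t) / (1 + Real.exp (-2 * t)) ^ 2| • g (fsechPsi t) := by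
        congr 1; funext t; rw [hpt t]
    _ = ∫ x in Set.Ioo (0:ℝ) 1, g x := subst.symm
    _ = Complex.betaIntegral s (1 - s) := by
        rw [Complex.betaIntegral, intervalIntegral.integral_of_le zero_le_one,
          MeasureTheory.integral_Ioc_eq_integral_Ioo]
        congr 1
        funext x
        rw [hg]
        norm_num
    _ = Complex.Gamma s * Complex.Gamma (1 - s) := by
        rw [Complex.Gamma_mul_Gamma_eq_betaIntegral (by rw [hres]; norm_num)
          (by rw [hres']; norm_num)]
        simp [Complex.Gamma_one]
    _ = (π : ℂ) / Complex.sin (π * s) := Complex.Gamma_mul_Gamma_one_sub s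
    _ = (π : ℂ) * (1 / Real.cosh (π * ω / 2)) := by
        have : Complex.sin (π * s) = (Real.cosh (π * ω / 2) : ℂ) := by
          rw [hs, show (π : ℂ) * ((1 - Complex.I * ω) / 2)
            = (π : ℂ) / 2 - (π * ω / 2 : ℂ) * Complex.I by push_cast; ring,
            Complex.sin_pi_div_two_sub, Complex.cos_mul_I]
          push_cast [Complex.ofReal_cosh]
          norm_num
        rw [this, div_eq_mul_inv, one_div]
end

section
/- For all real ω ≠ 0, the Fourier transform of sech² satisfies ∫_{-∞}^{∞} sech²(x) e^{-iωx} dx = πω·csch(πω/2), and the formula extends continuously to ω = 0 with value 2 (since πω·csch(πω/2) → 2 as ω → 0). -/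
open Real MeasureTheory Filter

noncomputable def fss (x : ℝ) : ℝ := (Real.exp (2*x) + 1)⁻¹

lemma fss_gpos (x : ℝ) : (0:ℝ) < Real.exp (2*x) + 1 := by positivity

lemma fss_deriv (x : ℝ) :
    HasDerivAt fss (-(2 * Real.exp (2*x)) / (Real.exp (2*x) + 1)^2) x := by
  have h1 : HasDerivAt (fun x : ℝ => Real.exp (2*x) + 1) (2 * Real.exp (2*x)) x := by
    have := (Real.hasDerivAt_exp (2*x)).comp x ((hasDerivAt_id x).const_mul 2)
    simpa [mul_comm] using this.add_const 1
  have := h1.inv (ne_of_gt (fss_gpos x))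
  exact this

lemma fss_mem (x : ℝ) : fss x ∈ Set.Ioo (0:ℝ) 1 := by
  unfold fss
  refine ⟨inv_pos.mpr (fss_gpos x), ?_⟩
  rw [inv_lt_one_iff₀]
  right; linarith [Real.exp_pos (2*x)]

lemma fss_range : fss '' Set.univ = Set.Ioo (0:ℝ) 1 := by
  apply Set.eq_of_subset_of_subset
  · rintro y ⟨x, -, rfl⟩; exact fss_mem x
  · rintro u ⟨hu0, hu1⟩
    refine ⟨Real.log ((1-u)/u) / 2, Set.mem_univ _, ?_⟩
    have h1 : (0:ℝ) < (1-u)/u := div_pos (by linarith) hu0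
    unfold fss
    rw [show 2 * (Real.log ((1-u)/u) / 2) = Real.log ((1-u)/u) by ring,
      Real.exp_log h1]
    rw [div_add' _ _ _ (ne_of_gt hu0)]
    field_simp
    ring

lemma fss_inj : Set.InjOn fss Set.univ := by
  intro x _ y _ h
  unfold fss at h
  have h2 : Real.exp (2*x) = Real.exp (2*y) := by
    have := inv_injective h; linarith
  have := Real.exp_injective h2
  linarith

lemma fss_absderiv (x : ℝ) :
    |(-(2 * Real.exp (2*x)) / (Real.exp (2*x) + 1)^2)| = (1 / Real.cosh x)^2 / 2 := by
  rw [abs_div, abs_neg, abs_of_nonneg (by positivity), abs_of_nonneg (by positivity)]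
  have ha : Real.exp (2*x) = Real.exp x * Real.exp x := by
    rw [← Real.exp_add]; ring_nf
  rw [Real.cosh_eq, Real.exp_neg, ha]
  have hx := (Real.exp_pos x).ne'
  field_simp

lemma fss_one_sub (x : ℝ) : (1:ℝ) - fss x = Real.exp (2*x) / (Real.exp (2*x) + 1) := by
  unfold fss
  field_simp
  ring

lemma fss_cpow (ω : ℝ) (x : ℝ) :
    ((fss x : ℂ) ^ (↑ω * Complex.I / 2)) * (((1 - fss x : ℝ) : ℂ) ^ (-(↑ω * Complex.I / 2)))
      = Complex.exp (-(Complex.I * ω * x)) := by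
  have h0 : (0:ℝ) < fss x := (fss_mem x).1
  have h1 : (0:ℝ) < 1 - fss x := by have := (fss_mem x).2; linarith
  rw [Complex.cpow_def_of_ne_zero (by exact_mod_cast h0.ne'),
    Complex.cpow_def_of_ne_zero (by exact_mod_cast h1.ne'),
    ← Complex.ofReal_log h0.le, ← Complex.ofReal_log h1.le,
    ← Complex.exp_add]
  have hl1 : Real.log (fss x) = -Real.log (Real.exp (2*x) + 1) := by
    unfold fss; rw [Real.log_inv]
  have hl2 : Real.log (1 - fss x) = 2*x - Real.log (Real.exp (2*x) + 1) := by
    rw [fss_one_sub, Real.log_div (Real.exp_pos _).ne' (fss_gpos x).ne', Real.log_exp]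
  rw [hl1, hl2]
  congr 1
  push_cast
  ring

lemma fss_integral (ω : ℝ) :
    ∫ u in Set.Ioo (0:ℝ) 1,
        ((u:ℂ) ^ (↑ω * Complex.I / 2) * ((1 - u : ℝ) : ℂ) ^ (-(↑ω * Complex.I / 2)))
      = (2:ℂ)⁻¹ * ∫ x : ℝ, ((1 / Real.cosh x : ℝ) ^ 2 : ℂ) * Complex.exp (-(Complex.I * ω * x)) := by
  have := integral_image_eq_integral_abs_deriv_smul (s := Set.univ)
    (f := fss) (f' := fun x => -(2 * Real.exp (2*x)) / (Real.exp (2*x) + 1)^2)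
    MeasurableSet.univ (fun x _ => (fss_deriv x).hasDerivWithinAt) fss_inj
    (fun u => (u:ℂ) ^ (↑ω * Complex.I / 2) * ((1 - u : ℝ) : ℂ) ^ (-(↑ω * Complex.I / 2)))
  rw [fss_range] at this
  rw [this, MeasureTheory.setIntegral_univ]
  rw [← MeasureTheory.integral_const_mul]
  congr 1
  ext x
  rw [fss_absderiv, fss_cpow]
  rw [← Complex.ofReal_pow]
  rw [Complex.real_smul]
  push_cast
  ring

lemma fss_beta (ω : ℝ) (hω : ω ≠ 0) :
    ∫ u in Set.Ioo (0:ℝ) 1,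
        ((u:ℂ) ^ (↑ω * Complex.I / 2) * ((1 - u : ℝ) : ℂ) ^ (-(↑ω * Complex.I / 2)))
      = (↑ω * Complex.I / 2) * (↑π / (↑(Real.sinh (π * ω / 2)) * Complex.I)) := by
  set z : ℂ := ↑ω * Complex.I / 2 with hz
  have hz0 : z ≠ 0 := by
    rw [hz]
    exact div_ne_zero (mul_ne_zero (Complex.ofReal_ne_zero.mpr hω) Complex.I_ne_zero) two_ne_zero
  have hzre : (0:ℝ) < (z+1).re := by simp [hz]
  have hz2 : (0:ℝ) < (1-z).re := by simp [hz]
  have hb : Complex.betaIntegral (z+1) (1-z)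
      = ∫ u in Set.Ioo (0:ℝ) 1, ((u:ℂ)^z * ((1-u:ℝ):ℂ)^(-z)) := by
    rw [Complex.betaIntegral, intervalIntegral.integral_of_le zero_le_one,
      MeasureTheory.integral_Ioc_eq_integral_Ioo]
    congr 1
    ext u
    rw [add_sub_cancel_right, show (1:ℂ)-z-1 = -z by ring]
    norm_cast
  have hG := Complex.Gamma_mul_Gamma_eq_betaIntegral hzre hz2
  rw [show z+1+(1-z) = 2 by ring, show Complex.Gamma 2 = 1 by
      simpa using Complex.Gamma_nat_eq_factorial 1, one_mul] at hG
  rw [← hb, ← hG, Complex.Gamma_add_one z hz0, mul_assoc,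
    Complex.Gamma_mul_Gamma_one_sub z,
    show ↑π * z = (↑(π*ω/2):ℂ) * Complex.I by rw [hz]; push_cast; ring,
    Complex.sin_mul_I, ← Complex.ofReal_sinh]

theorem fourier_sech_sq (ω : ℝ) (hω : ω ≠ 0) :
    (∫ x : ℝ, ((1 / Real.cosh x : ℝ) ^ 2 : ℂ) * Complex.exp (-(Complex.I * ω * x)) =
      (π : ℂ) * ω * (1 / Real.sinh (π * ω / 2))) ∧
    Tendsto (fun t : ℝ => π * t * (1 / Real.sinh (π * t / 2))) (nhdsWithin 0 {0}ᶜ)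
      (nhds 2) := by
  constructor
  · have h := (fss_integral ω).symm.trans (fss_beta ω hω)
    have hS : Real.sinh (π * ω / 2) ≠ 0 := by
      rw [Real.sinh_ne_zero]
      exact div_ne_zero (mul_ne_zero Real.pi_ne_zero hω) two_ne_zero
    have hS' : (↑(Real.sinh (π * ω / 2)) : ℂ) ≠ 0 := Complex.ofReal_ne_zero.mpr hS
    have hS'' : Complex.sinh ((π:ℂ) * ω / 2) ≠ 0 := by
      rw [show ((π:ℂ) * ω / 2) = ((π * ω / 2 : ℝ) : ℂ) by push_cast; ring, ← Complex.ofReal_sinh]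
      exact hS'
    field_simp at h ⊢
    apply mul_right_cancel₀ (mul_ne_zero two_ne_zero Complex.I_ne_zero)
    linear_combination (2 * Complex.I) * h
  · have h1 : Tendsto (fun t:ℝ => Real.sinh t / t) (nhdsWithin 0 {0}ᶜ) (nhds 1) := by
      have h0 := hasDerivAt_iff_tendsto_slope.mp (Real.hasDerivAt_sinh 0)
      rw [Real.cosh_zero] at h0
      refine h0.congr fun t => ?_
      simp [slope_def_field, Real.sinh_zero]
    have hmap : Tendsto (fun t:ℝ => π * t / 2) (nhdsWithin 0 {0}ᶜ) (nhdsWithin 0 {0}ᶜ) := by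
      apply tendsto_nhdsWithin_of_tendsto_nhds_of_eventually_within
      · have hcont : Continuous fun t : ℝ => π * t / 2 := by fun_prop
        have : Tendsto (fun t:ℝ => π * t / 2) (nhds 0) (nhds 0) := by
          simpa using hcont.tendsto 0
        exact this.mono_left nhdsWithin_le_nhds
      · filter_upwards [self_mem_nhdsWithin] with t ht
        simp only [Set.mem_compl_iff, Set.mem_singleton_iff] at ht ⊢
        exact div_ne_zero (mul_ne_zero Real.pi_ne_zero ht) two_ne_zero
    have h2 : Tendsto (fun t:ℝ => Real.sinh (π*t/2) / (π*t/2)) (nhdsWithin 0 {0}ᶜ) (nhds 1) :=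
      h1.comp hmap
    have h3 := (h2.inv₀ one_ne_zero).const_mul (2:ℝ)
    simp only [inv_one, mul_one] at h3
    apply h3.congr'
    filter_upwards [self_mem_nhdsWithin] with t ht
    simp only [Set.mem_compl_iff, Set.mem_singleton_iff] at ht
    have hS : Real.sinh (π * t / 2) ≠ 0 := by
      rw [Real.sinh_ne_zero]
      exact div_ne_zero (mul_ne_zero Real.pi_ne_zero ht) two_ne_zero
    have hπt : π * t ≠ 0 := mul_ne_zero Real.pi_ne_zero ht
    field_simp
end

section
/- For all real ω ≠ 0, the convolution identity (1/(2π)) ∫_{-∞}^{∞} π sech(πt/2) · π sech(π(ω−t)/2) dt = πω csch(πω/2) holds. -/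
open Real MeasureTheory Filter Set Topology

/-- Integrability of `sech (a * t)` for `a > 0`. -/
lemma integrable_sech_aux {a : ℝ} (ha : 0 < a) :
    Integrable (fun t : ℝ => 1 / Real.cosh (a * t)) := by
  have hcont : Continuous (fun t : ℝ => 1 / Real.cosh (a * t)) :=
    continuous_const.div (Real.continuous_cosh.comp (continuous_const.mul continuous_id))
      (fun t => (Real.cosh_pos _).ne')
  have hbound : ∀ t : ℝ, 1 / Real.cosh (a * t) ≤ 2 * Real.exp (-a * t) := by
    intro t
    rw [div_le_iff₀ (Real.cosh_pos _)]
    have h1 : Real.exp (a * t) / 2 ≤ Real.cosh (a * t) := by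
      rw [Real.cosh_eq]
      have := (Real.exp_pos (-(a * t))).le
      linarith
    calc (1 : ℝ) = Real.exp (-a * t) * Real.exp (a * t) := by
          rw [← Real.exp_add]; simp
      _ ≤ 2 * Real.exp (-a * t) * Real.cosh (a * t) := by
          nlinarith [Real.exp_pos (-a * t)]
  have hIoi : IntegrableOn (fun t : ℝ => 1 / Real.cosh (a * t)) (Ioi 0) := by
    apply Integrable.mono' ((exp_neg_integrableOn_Ioi 0 ha).const_mul 2)
    · exact hcont.aestronglyMeasurable.restrict
    · filter_upwards with t
      rw [Real.norm_eq_abs, abs_of_pos (by positivity)]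
      exact hbound t
  have hIic : IntegrableOn (fun t : ℝ => 1 / Real.cosh (a * t)) (Iic 0) := by
    have m : MeasurableEmbedding (fun x : ℝ => -x) :=
      (Homeomorph.neg ℝ).measurableEmbedding
    rw [IntegrableOn, ← Measure.map_neg_eq_self (volume : Measure ℝ), ← IntegrableOn,
      m.integrableOn_map_iff]
    have hset : (fun x : ℝ => -x) ⁻¹' (Iic 0) = Ici 0 := by
      ext x; simp
    have hfun : (fun t : ℝ => 1 / Real.cosh (a * t)) ∘ (fun x : ℝ => -x) =
        fun t : ℝ => 1 / Real.cosh (a * t) := by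
      funext t; simp [Function.comp, mul_neg, Real.cosh_neg]
    rw [hset, hfun]
    exact Iff.mpr integrableOn_Ici_iff_integrableOn_Ioi hIoi
  have := hIic.union hIoi
  rwa [Iic_union_Ioi, integrableOn_univ] at this

theorem sech_convolution (ω : ℝ) (hω : ω ≠ 0) :
    (1 / (2 * π)) * ∫ t : ℝ,
        (π * (1 / Real.cosh (π * t / 2))) * (π * (1 / Real.cosh (π * (ω - t) / 2))) =
      π * ω * (1 / Real.sinh (π * ω / 2)) := by
  have hπ : (0 : ℝ) < π := Real.pi_pos
  set y : ℝ := π * ω / 2 with hy_def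
  have hy : y ≠ 0 := by
    simp only [hy_def, div_ne_zero_iff]
    constructor
    · exact mul_ne_zero hπ.ne' hω
    · norm_num
  have hsinh : Real.sinh y ≠ 0 := fun h => hy (Real.sinh_eq_zero.mp h)
  -- antiderivative
  set F : ℝ → ℝ := fun t => Real.log (Real.cosh (π * t / 2)) -
      Real.log (Real.cosh (π * t / 2 - y)) with hF_def
  set G : ℝ → ℝ := fun t => (π / 2) * Real.sinh y /
      (Real.cosh (π * t / 2) * Real.cosh (π * t / 2 - y)) with hG_def
  -- derivative computation
  have hderiv : ∀ t : ℝ, HasDerivAt F (G t) t := by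
    intro t
    have hu : HasDerivAt (fun t : ℝ => π * t / 2) (π / 2) t := by
      simpa using ((hasDerivAt_id t).const_mul π).div_const 2
    have hv : HasDerivAt (fun t : ℝ => π * t / 2 - y) (π / 2) t := hu.sub_const y
    have h1 : HasDerivAt (fun t : ℝ => Real.cosh (π * t / 2))
        (Real.sinh (π * t / 2) * (π / 2)) t := (Real.hasDerivAt_cosh _).comp t hu
    have h2 : HasDerivAt (fun t : ℝ => Real.cosh (π * t / 2 - y))
        (Real.sinh (π * t / 2 - y) * (π / 2)) t := (Real.hasDerivAt_cosh _).comp t hv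
    have h3 := (h1.log ((Real.cosh_pos _).ne')).sub (h2.log ((Real.cosh_pos _).ne'))
    have hkey : Real.sinh (π * t / 2) * Real.cosh (π * t / 2 - y) -
        Real.cosh (π * t / 2) * Real.sinh (π * t / 2 - y) = Real.sinh y := by
      rw [← Real.sinh_sub]; ring_nf
    have hc1 := (Real.cosh_pos (π * t / 2)).ne'
    have hc2 := (Real.cosh_pos (π * t / 2 - y)).ne'
    have hGeq : G t = Real.sinh (π * t / 2) * (π / 2) / Real.cosh (π * t / 2) -
        Real.sinh (π * t / 2 - y) * (π / 2) / Real.cosh (π * t / 2 - y) := by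
      rw [hG_def]
      simp only
      rw [← hkey]
      field_simp
    rw [hGeq]
    exact h3
  -- integrability of G
  have hGint : Integrable G := by
    have base := (integrable_sech_aux (a := π / 2) (by positivity)).const_mul
      (|π / 2 * Real.sinh y|)
    apply Integrable.mono' base
    · apply Continuous.aestronglyMeasurable
      apply Continuous.div continuous_const
      · exact (Real.continuous_cosh.comp (by continuity)).mul
          (Real.continuous_cosh.comp (by continuity))
      · intro t
        exact (mul_pos (Real.cosh_pos _) (Real.cosh_pos _)).ne'
    · filter_upwards with t
      have hc1 : (0 : ℝ) < Real.cosh (π * t / 2) := Real.cosh_pos _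
      have hc2 : (0 : ℝ) < Real.cosh (π * t / 2 - y) := Real.cosh_pos _
      have h1le : (1 : ℝ) ≤ Real.cosh (π * t / 2 - y) := Real.one_le_cosh _
      rw [hG_def]
      simp only [Real.norm_eq_abs]
      rw [abs_div, abs_of_pos (mul_pos hc1 hc2)]
      have heq : π / 2 * t = π * t / 2 := by ring
      rw [heq]
      rw [div_le_iff₀ (mul_pos hc1 hc2)]
      calc |π / 2 * Real.sinh y| = |π / 2 * Real.sinh y| * 1 := by ring
        _ ≤ (|π / 2 * Real.sinh y| * (1 / Real.cosh (π * t / 2))) *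
              (Real.cosh (π * t / 2) * Real.cosh (π * t / 2 - y)) := by
            rw [mul_assoc, ← mul_assoc (1 / Real.cosh (π * t / 2))]
            rw [div_mul_cancel₀ _ hc1.ne', one_mul]
            exact mul_le_mul_of_nonneg_left h1le (abs_nonneg _)
  -- auxiliary function for the limits
  set h : ℝ → ℝ := fun x => Real.log ((1 + Real.exp (-2 * x)) / 2) with hh_def
  have hlcosh : ∀ x : ℝ, Real.log (Real.cosh x) = x + h x := by
    intro x
    have hpos : (0 : ℝ) < (1 + Real.exp (-2 * x)) / 2 := by positivity
    have : Real.cosh x = Real.exp x * ((1 + Real.exp (-2 * x)) / 2) := by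
      rw [Real.cosh_eq, mul_div_assoc']
      congr 1
      rw [mul_add, mul_one, ← Real.exp_add]
      ring_nf
    rw [this, Real.log_mul (Real.exp_ne_zero x) hpos.ne', Real.log_exp]
  have hhlim : Tendsto h atTop (𝓝 (Real.log (1 / 2))) := by
    have hexp : Tendsto (fun x : ℝ => Real.exp (-2 * x)) atTop (𝓝 0) := by
      apply Real.tendsto_exp_atBot.comp
      exact (tendsto_const_mul_atBot_of_neg (by norm_num)).mpr tendsto_id
    have h2 : Tendsto (fun x : ℝ => (1 + Real.exp (-2 * x)) / 2) atTop
        (𝓝 ((1 : ℝ) / 2)) := by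
      have := ((tendsto_const_nhds (x := (1:ℝ)) (f := atTop)).add hexp).div_const (2 : ℝ)
      simpa using this
    exact h2.log (by norm_num)
  have hut : Tendsto (fun t : ℝ => π * t / 2) atTop atTop :=
    (tendsto_div_const_atTop_of_pos (by norm_num)).mpr
      ((tendsto_const_mul_atTop_of_pos hπ).mpr tendsto_id)
  have hub : Tendsto (fun t : ℝ => π * t / 2) atBot atBot :=
    (tendsto_div_const_atBot_of_pos (by norm_num)).mpr
      ((tendsto_const_mul_atBot_of_pos hπ).mpr tendsto_id)
  have htop : Tendsto F atTop (𝓝 y) := by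
    have heq : F = fun t => y + (h (π * t / 2) - h (π * t / 2 - y)) := by
      funext t; rw [hF_def]; simp only
      rw [hlcosh (π * t / 2), hlcosh (π * t / 2 - y)]; ring
    rw [heq]
    have h1 : Tendsto (fun t : ℝ => h (π * t / 2)) atTop (𝓝 (Real.log (1 / 2))) :=
      hhlim.comp hut
    have h2 : Tendsto (fun t : ℝ => h (π * t / 2 - y)) atTop (𝓝 (Real.log (1 / 2))) :=
      hhlim.comp (tendsto_atTop_add_const_right _ (-y) hut |>.congr (fun t => by ring))
    have := tendsto_const_nhds (α := ℝ) (x := y) (f := atTop) |>.add (h1.sub h2)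
    simpa using this
  have hbot : Tendsto F atBot (𝓝 (-y)) := by
    have heq : F = fun t => -y + (h (-(π * t / 2)) - h (-(π * t / 2 - y))) := by
      funext t; rw [hF_def]; simp only
      rw [← Real.cosh_neg (π * t / 2), ← Real.cosh_neg (π * t / 2 - y),
        hlcosh (-(π * t / 2)), hlcosh (-(π * t / 2 - y))]
      ring
    rw [heq]
    have hnt : Tendsto (fun t : ℝ => -(π * t / 2)) atBot atTop := tendsto_neg_atBot_atTop.comp hub
    have h1 : Tendsto (fun t : ℝ => h (-(π * t / 2))) atBot (𝓝 (Real.log (1 / 2))) :=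
      hhlim.comp hnt
    have h2 : Tendsto (fun t : ℝ => h (-(π * t / 2 - y))) atBot (𝓝 (Real.log (1 / 2))) := by
      apply hhlim.comp
      have := tendsto_atTop_add_const_right _ y hnt
      exact this.congr (fun t => by ring)
    have := tendsto_const_nhds (α := ℝ) (x := -y) (f := atBot) |>.add (h1.sub h2)
    simpa using this
  -- FTC on the whole line
  have hFTC : ∫ t : ℝ, G t = y - (-y) :=
    integral_of_hasDerivAt_of_tendsto hderiv hGint hbot htop
  -- rewrite the integrand as a constant multiple of G
  have hinteq : (fun t : ℝ => (π * (1 / Real.cosh (π * t / 2))) *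
      (π * (1 / Real.cosh (π * (ω - t) / 2)))) = fun t => (2 * π / Real.sinh y) * G t := by
    funext t
    have hc1 := (Real.cosh_pos (π * t / 2)).ne'
    have hc2 := (Real.cosh_pos (π * t / 2 - y)).ne'
    have hcosh_eq : Real.cosh (π * (ω - t) / 2) = Real.cosh (π * t / 2 - y) := by
      rw [← Real.cosh_neg (π * t / 2 - y)]
      congr 1
      rw [hy_def]; ring
    rw [hcosh_eq, hG_def]
    field_simp
  rw [hinteq, integral_const_mul, hFTC]
  rw [hy_def]
  field_simp
  norm_num
end

section
/- For every positive real s, every real μ > 0, and every positive real a, ∫_0^∞ r^{μ−1} e^{−ar} sin(sr) dr = Γ(μ)/(a² + s²)^{μ/2} · sin(μ·arctan(s/a)). -/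
open Real MeasureTheory Set Complex Filter

lemma integ_aux {ν : ℝ} (hν : -1 < ν) {c : ℝ} (hc : 0 < c) :
    IntegrableOn (fun t : ℝ => t ^ ν * Real.exp (-(c * t))) (Ioi 0) := by
  have := integrableOn_rpow_mul_exp_neg_mul_rpow hν one_pos hc
  simpa [Real.rpow_one] using this

lemma cmeas (ν : ℝ) (b : ℂ) :
    AEStronglyMeasurable (fun t : ℝ => (t : ℂ) ^ (ν : ℂ) * Complex.exp (-(b * t)))
      (volume.restrict (Ioi 0)) := by
  apply ContinuousOn.aestronglyMeasurable _ measurableSet_Ioi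
  apply ContinuousOn.mul
  · exact fun t ht => (Complex.continuousAt_ofReal_cpow_const _ _
      (Or.inr (by exact_mod_cast ne_of_gt ht))).continuousWithinAt
  · exact (Complex.continuous_exp.comp (continuous_const.mul Complex.continuous_ofReal).neg).continuousOn

lemma cnorm {ν : ℝ} {t : ℝ} (ht : 0 < t) (b : ℂ) :
    ‖(t : ℂ) ^ (ν : ℂ) * Complex.exp (-(b * t))‖ = t ^ ν * Real.exp (-(b.re * t)) := by
  rw [norm_mul,
    Complex.norm_cpow_eq_rpow_re_of_pos ht, Complex.norm_exp]
  simp [Complex.mul_re]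

lemma cintegrable {ν : ℝ} (hν : -1 < ν) {b : ℂ} (hb : 0 < b.re) :
    IntegrableOn (fun t : ℝ => (t : ℂ) ^ (ν : ℂ) * Complex.exp (-(b * t))) (Ioi 0) := by
  refine (integ_aux hν hb).mono' (cmeas ν b) ?_
  filter_upwards [ae_restrict_mem measurableSet_Ioi] with t ht
  rw [cnorm ht]

lemma hμ1 {μ : ℝ} : ((μ : ℂ) - 1) = ((μ - 1 : ℝ) : ℂ) := by push_cast; ring

lemma key_deriv {μ : ℝ} (hμ : 0 < μ) {b : ℂ} (hb : 0 < b.re) :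
    HasDerivAt (fun z : ℂ => ∫ t in Ioi (0:ℝ), (t : ℂ) ^ ((μ : ℂ) - 1) * Complex.exp (-(z * t)))
      (∫ t in Ioi (0:ℝ), -t * ((t : ℂ) ^ ((μ : ℂ) - 1) * Complex.exp (-(b * t)))) b := by
  have hc : 0 < b.re / 2 := by linarith
  have key := hasDerivAt_integral_of_dominated_loc_of_deriv_le (F := fun z (t : ℝ) =>
      (t : ℂ) ^ ((μ : ℂ) - 1) * Complex.exp (-(z * t)))
    (F' := fun z (t : ℝ) => -t * ((t : ℂ) ^ ((μ : ℂ) - 1) * Complex.exp (-(z * t))))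
    (μ := volume.restrict (Ioi (0:ℝ))) (x₀ := b)
    (bound := fun t : ℝ => t ^ μ * Real.exp (-(b.re / 2 * t)))
    (s := Metric.ball b (b.re / 2)) (Metric.ball_mem_nhds b hc) ?_ ?_ ?_ ?_ ?_ ?_
  · exact key.2
  · filter_upwards with z
    rw [hμ1]; exact cmeas _ z
  · rw [hμ1]; exact cintegrable (by linarith) hb
  · apply AEStronglyMeasurable.mul
    · exact (Complex.measurable_ofReal.neg.comp measurable_id).aestronglyMeasurable
    · rw [hμ1]; exact cmeas _ b
  · filter_upwards [ae_restrict_mem measurableSet_Ioi] with t ht z hz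
    rw [mem_Ioi] at ht
    rw [norm_mul, hμ1, cnorm ht]
    have hz' : b.re / 2 ≤ z.re := by
      have := Complex.abs_re_le_norm (z - b)
      rw [Metric.mem_ball, Complex.dist_eq] at hz
      have : |(z - b).re| < b.re / 2 := lt_of_le_of_lt this hz
      rw [Complex.sub_re, abs_lt] at this
      linarith
    have h1 : ‖((-t : ℝ) : ℂ)‖ = t := by
      simp [abs_of_pos ht]
    rw [show (-(t:ℂ)) = ((-t : ℝ) : ℂ) by push_cast; ring, h1]
    have : t ^ (μ - 1) * t = t ^ μ := by
      rw [← Real.rpow_add_one (ne_of_gt ht)]; ring_nf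
    calc t * (t ^ (μ - 1) * Real.exp (-(z.re * t)))
        = t ^ μ * Real.exp (-(z.re * t)) := by rw [← this]; ring
      _ ≤ t ^ μ * Real.exp (-(b.re / 2 * t)) := by
          have h2 : Real.exp (-(z.re * t)) ≤ Real.exp (-(b.re / 2 * t)) :=
            Real.exp_le_exp.2 (by nlinarith)
          exact mul_le_mul_of_nonneg_left h2 (Real.rpow_nonneg ht.le μ)
  · exact integ_aux (by linarith) hc
  · filter_upwards [ae_restrict_mem measurableSet_Ioi] with t ht z hz
    have : HasDerivAt (fun z : ℂ => Complex.exp (-(z * t))) (-t * Complex.exp (-(z * t))) z := by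
      have h := (Complex.hasDerivAt_exp (-(z * t))).comp z
        (((hasDerivAt_id z).mul_const (t:ℂ)).neg)
      simpa [mul_comm, Function.comp_def, Pi.neg_def] using h
    simpa [mul_comm, mul_assoc, mul_left_comm] using this.const_mul ((t : ℂ) ^ ((μ:ℂ) - 1))

lemma key_real {μ : ℝ} (hμ : 0 < μ) {x : ℝ} (hx : 0 < x) :
    ∫ t in Ioi (0:ℝ), (t : ℂ) ^ ((μ : ℂ) - 1) * Complex.exp (-((x:ℂ) * t)) =
      (Complex.Gamma μ) * (x:ℂ) ^ (-μ : ℂ) := by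
  have h := Complex.integral_cpow_mul_exp_neg_mul_Ioi
    (a := (μ:ℂ)) (r := x) (by simpa using hμ) hx
  rw [h, mul_comm]
  congr 1
  have h1 : ((1/x : ℝ) : ℂ) ^ (μ : ℂ) = (((1/x) ^ μ : ℝ) : ℂ) :=
    (Complex.ofReal_cpow (by positivity) μ).symm
  have h2 : ((x : ℝ) : ℂ) ^ ((-μ : ℝ) : ℂ) = ((x ^ (-μ) : ℝ) : ℂ) :=
    (Complex.ofReal_cpow hx.le (-μ)).symm
  have h3 : (1/x) ^ μ = x ^ (-μ) := by
    rw [Real.rpow_neg hx.le, one_div, Real.inv_rpow hx.le]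
  rw [show ((1:ℂ)/x) = ((1/x : ℝ) : ℂ) by push_cast; ring, h1,
    show ((-μ : ℂ)) = ((-μ : ℝ) : ℂ) by push_cast; ring, h2, h3]

lemma key_complex {μ : ℝ} (hμ : 0 < μ) {b : ℂ} (hb : 0 < b.re) :
    ∫ t in Ioi (0:ℝ), (t : ℂ) ^ ((μ : ℂ) - 1) * Complex.exp (-(b * t)) =
      (Complex.Gamma μ) * b ^ (-μ : ℂ) := by
  set U : Set ℂ := {z | 0 < z.re} with hU
  have hUopen : IsOpen U := isOpen_lt continuous_const Complex.continuous_re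
  have hf : AnalyticOnNhd ℂ
      (fun z : ℂ => ∫ t in Ioi (0:ℝ), (t : ℂ) ^ ((μ : ℂ) - 1) * Complex.exp (-(z * t))) U := by
    apply DifferentiableOn.analyticOnNhd _ hUopen
    intro z hz
    exact (key_deriv hμ hz).differentiableAt.differentiableWithinAt
  have hg : AnalyticOnNhd ℂ (fun z : ℂ => (Complex.Gamma μ) * z ^ (-μ : ℂ)) U := by
    apply DifferentiableOn.analyticOnNhd _ hUopen
    intro z hz
    exact ((analyticAt_const.mul (analyticAt_id.cpow analyticAt_const
      (Or.inl hz))).differentiableAt).differentiableWithinAt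
  have h1 : (1 : ℂ) ∈ U := by simp [hU]
  have hfreq : ∃ᶠ z in nhdsWithin (1:ℂ) {(1:ℂ)}ᶜ,
      (∫ t in Ioi (0:ℝ), (t : ℂ) ^ ((μ : ℂ) - 1) * Complex.exp (-(z * t))) =
        (Complex.Gamma μ) * z ^ (-μ : ℂ) := by
    have htend : Tendsto (fun n : ℕ => (1 + ((n:ℝ)+1)⁻¹ : ℂ)) atTop
        (nhdsWithin (1:ℂ) {(1:ℂ)}ᶜ) := by
      apply tendsto_nhdsWithin_of_tendsto_nhds_of_eventually_within
      · have : Tendsto (fun n : ℕ => ((n:ℝ)+1)⁻¹) atTop (nhds 0) :=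
          tendsto_one_div_add_atTop_nhds_zero_nat.congr (by intro n; simp [one_div])
        have := ((continuous_ofReal.tendsto 0).comp this).const_add (1:ℂ)
        simpa using this
      · filter_upwards with n
        simp only [Set.mem_compl_iff, Set.mem_singleton_iff]
        intro h
        have h2 := congrArg Complex.re h
        simp only [Complex.add_re, Complex.one_re, Complex.ofReal_re] at h2
        have : (0:ℝ) < ((n:ℝ)+1)⁻¹ := by positivity
        linarith
    apply htend.frequently
    apply Frequently.of_forall
    intro n
    have hx : (0:ℝ) < 1 + ((n:ℝ)+1)⁻¹ := by positivity
    have := key_real hμ hx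
    convert this using 3 <;> push_cast <;> ring
  exact AnalyticOnNhd.eqOn_of_preconnected_of_frequently_eq hf hg
    (convex_halfSpace_re_gt 0).isPreconnected h1 hfreq hb

theorem integral_rpow_exp_sin (s : ℝ) (hs : 0 < s) (μ : ℝ) (hμ : 0 < μ)
    (a : ℝ) (ha : 0 < a) :
    ∫ r in Set.Ioi (0 : ℝ), r ^ (μ - 1) * Real.exp (-(a * r)) * Real.sin (s * r) =
      Real.Gamma μ / (a ^ 2 + s ^ 2) ^ (μ / 2) * Real.sin (μ * Real.arctan (s / a)) := by
  set b : ℂ := (a:ℂ) - (s:ℂ) * Complex.I with hbdef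
  have hbre : b.re = a := by simp [hbdef]
  have hbim : b.im = -s := by simp [hbdef]
  have hbre' : 0 < b.re := by rw [hbre]; exact ha
  have hsum : 0 < a^2 + s^2 := by positivity
  -- LHS = im of complex integral
  have him : ∀ r ∈ Ioi (0:ℝ),
      r ^ (μ - 1) * Real.exp (-(a * r)) * Real.sin (s * r) =
        ((r : ℂ) ^ ((μ : ℂ) - 1) * Complex.exp (-(b * r))).im := by
    intro r hr
    rw [mem_Ioi] at hr
    have h1 : (r : ℂ) ^ ((μ : ℂ) - 1) = ((r ^ (μ-1) : ℝ) : ℂ) := by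
      rw [hμ1]; exact (Complex.ofReal_cpow hr.le (μ-1)).symm
    rw [h1]
    have h2 : -(b * r) = Complex.mk (-(a*r)) (s*r) := by
      apply Complex.ext <;> simp [hbdef]
    rw [h2, Complex.im_ofReal_mul]
    rw [Complex.exp_im]
    simp only [Complex.exp_re]
    ring
  have hLHS : (∫ r in Ioi (0:ℝ), r ^ (μ - 1) * Real.exp (-(a * r)) * Real.sin (s * r)) =
      (∫ r in Ioi (0:ℝ), (r : ℂ) ^ ((μ : ℂ) - 1) * Complex.exp (-(b * r))).im := by
    have hint : IntegrableOn (fun r : ℝ => (r : ℂ) ^ ((μ : ℂ) - 1) * Complex.exp (-(b * r)))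
        (Ioi 0) := by rw [hμ1]; exact cintegrable (by linarith) hbre'
    have h3 := Complex.imCLM.integral_comp_comm hint
    simp only [Complex.imCLM_apply] at h3
    rw [setIntegral_congr_fun measurableSet_Ioi him, ← h3]
  rw [hLHS, key_complex hμ hbre']
  -- now compute the imaginary part of Γ(μ) * b^(-μ)
  have habs : ‖b‖ = Real.sqrt (a^2+s^2) := by
    rw [Complex.norm_def, Complex.normSq_apply, hbre, hbim]
    ring_nf
  have hb0 : b ≠ 0 := by
    intro h; rw [h] at hbre'; simp at hbre'
  have harg : Complex.arg b = -Real.arctan (s/a) := by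
    have hR : (0:ℝ) < Real.sqrt (a^2+s^2) := Real.sqrt_pos.2 hsum
    have hsq : Real.sqrt (1 + (s/a)^2) = Real.sqrt (a^2+s^2) / a := by
      rw [show 1 + (s/a)^2 = (a^2+s^2)/a^2 by field_simp,
        Real.sqrt_div hsum.le, Real.sqrt_sq ha.le]
    have hb_eq : b = (Real.sqrt (a^2+s^2) : ℂ) *
        (Complex.cos (-Real.arctan (s/a)) + Complex.sin (-Real.arctan (s/a)) * Complex.I) := by
      rw [hbdef]
      rw [show Complex.cos (-Real.arctan (s/a)) = ((Real.cos (-Real.arctan (s/a)) : ℝ) : ℂ) by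
          rw [Complex.ofReal_cos]; norm_num,
        show Complex.sin (-Real.arctan (s/a)) = ((Real.sin (-Real.arctan (s/a)) : ℝ) : ℂ) by
          rw [Complex.ofReal_sin]; norm_num]
      rw [Real.cos_neg, Real.sin_neg, Real.cos_arctan, Real.sin_arctan]
      apply Complex.ext
      · simp only [Complex.sub_re, Complex.add_re, Complex.add_im, Complex.mul_re, Complex.ofReal_re,
          Complex.ofReal_im, Complex.I_re, Complex.I_im, Complex.neg_re, Complex.neg_im,
          Complex.mul_im]
        rw [hsq]
        field_simp
        ring
      · simp only [Complex.sub_im, Complex.add_im, Complex.mul_im, Complex.ofReal_re,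
          Complex.ofReal_im, Complex.I_re, Complex.I_im, Complex.neg_re, Complex.neg_im,
          Complex.mul_re]
        rw [hsq]
        field_simp
        ring
    rw [hb_eq, Complex.arg_real_mul _ hR,
      show (-(↑(Real.arctan (s/a)):ℂ)) = ((-Real.arctan (s/a) : ℝ) : ℂ) from
        (Complex.ofReal_neg _).symm]
    apply Complex.arg_cos_add_sin_mul_I
    have h1 := Real.arctan_lt_pi_div_two (s/a)
    have h2 := Real.neg_pi_div_two_lt_arctan (s/a)
    have h3 := Real.pi_pos
    constructor <;> [linarith; linarith]
  -- im (Γμ * b^(-μ))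
  rw [Complex.Gamma_ofReal]
  have hcpow : b ^ (-μ : ℂ) = Complex.exp (Complex.log b * (-μ : ℂ)) := by
    rw [Complex.cpow_def_of_ne_zero hb0]
  rw [hcpow]
  rw [show ((Real.Gamma μ : ℂ) * Complex.exp (Complex.log b * (-μ:ℂ))).im
      = Real.Gamma μ * (Complex.exp (Complex.log b * (-μ:ℂ))).im from Complex.im_ofReal_mul _ _]
  rw [Complex.exp_im]
  have hre : (Complex.log b * (-μ:ℂ)).re = Real.log ‖b‖ * (-μ) := by
    simp [Complex.mul_re, Complex.log_re]
  have him2 : (Complex.log b * (-μ:ℂ)).im = μ * Real.arctan (s/a) := by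
    simp [Complex.mul_im, Complex.log_im, harg]
    ring
  rw [hre, him2, habs]
  have hexp : Real.exp (Real.log (Real.sqrt (a^2+s^2)) * (-μ)) = ((a^2+s^2) ^ (μ/2))⁻¹ := by
    rw [← Real.rpow_def_of_pos (Real.sqrt_pos.2 hsum), Real.sqrt_eq_rpow,
      ← Real.rpow_mul hsum.le, show (1/2) * (-μ) = -(μ/2) by ring,
      Real.rpow_neg hsum.le]
  rw [hexp]
  rw [div_eq_mul_inv]
  ring
end

section
/- For real α, β with α + β > 0 and α > 0, the function g(x) = ‖x‖^β tanh^α(‖x‖) on ℝⁿ satisfies: g(x) − ‖x‖^β is integrable on ℝⁿ, i.e., x ↦ ‖x‖^β(1 − tanh^α‖x‖) ∈ L¹(ℝⁿ), provided β > −n. -/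
open Real MeasureTheory Set Metric
open scoped ENNReal

/-- Radial integrability criterion on Euclidean space, at the level of Lebesgue integrals. -/
lemma radial_lintegral_lt_top_aux (n : ℕ) (hn : 1 ≤ n) (f : ℝ → ℝ≥0∞) (hf : Measurable f)
    (hfin : ∫⁻ y in Ioi (0 : ℝ), ENNReal.ofReal (y ^ (n - 1)) * f y < ⊤) :
    ∫⁻ x : EuclideanSpace ℝ (Fin n), f ‖x‖ < ⊤ := by
  haveI : Inhabited (Fin n) := ⟨⟨0, hn⟩⟩
  haveI : Nontrivial (EuclideanSpace ℝ (Fin n)) := by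
    refine nontrivial_of_ne 0 (EuclideanSpace.single default 1) fun h => ?_
    have := congrArg (fun v : EuclideanSpace ℝ (Fin n) => v default) h
    simp [EuclideanSpace.single_apply] at this
  set E := EuclideanSpace ℝ (Fin n) with hE
  set μ : Measure E := volume with hμ
  have hdim : Module.finrank ℝ E = n := finrank_euclideanSpace_fin
  have h1 : ∫⁻ x : E, f ‖x‖ ∂μ
      = ∫⁻ x : ({(0 : E)}ᶜ : Set E), f ‖(x : E)‖ ∂(μ.comap Subtype.val) := by
    rw [lintegral_subtype_comap (measurableSet_singleton (0 : E)).compl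
      (fun e : E => f ‖e‖), MeasureTheory.restrict_compl_singleton]
  have hmeas : Measurable fun p : sphere (0 : E) 1 × Ioi (0 : ℝ) => f p.2 :=
    hf.comp (measurable_subtype_coe.comp measurable_snd)
  have h2 : ∫⁻ x : ({(0 : E)}ᶜ : Set E), f ‖(x : E)‖ ∂(μ.comap Subtype.val)
      = ∫⁻ p : sphere (0 : E) 1 × Ioi (0 : ℝ), f p.2
          ∂(μ.toSphere.prod (.volumeIoiPow (Module.finrank ℝ E - 1))) := by
    rw [← (μ.measurePreserving_homeomorphUnitSphereProd).lintegral_comp hmeas]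
    simp [homeomorphUnitSphereProd]
  have h3 : ∫⁻ p : sphere (0 : E) 1 × Ioi (0 : ℝ), f p.2
          ∂(μ.toSphere.prod (.volumeIoiPow (Module.finrank ℝ E - 1)))
      = (∫⁻ y : Ioi (0 : ℝ), f y ∂(Measure.volumeIoiPow (Module.finrank ℝ E - 1)))
          * μ.toSphere univ := by
    rw [lintegral_prod _ hmeas.aemeasurable]
    simp [lintegral_const, mul_comm]
  have h4 : ∫⁻ y : Ioi (0 : ℝ), f y ∂(Measure.volumeIoiPow (Module.finrank ℝ E - 1))
      = ∫⁻ y in Ioi (0 : ℝ), ENNReal.ofReal (y ^ (n - 1)) * f y := by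
    rw [hdim]
    calc ∫⁻ y : Ioi (0 : ℝ), f ↑y ∂(Measure.volumeIoiPow (n - 1))
        = ∫⁻ y : Ioi (0 : ℝ), ENNReal.ofReal ((y : ℝ) ^ (n - 1)) * f ↑y
            ∂(Measure.comap Subtype.val volume) := by
          rw [Measure.volumeIoiPow, lintegral_withDensity_eq_lintegral_mul _
            ((measurable_subtype_coe.pow_const _).ennreal_ofReal)
            (show Measurable fun y : Ioi (0 : ℝ) => f ↑y from
              hf.comp measurable_subtype_coe)]
          rfl
      _ = ∫⁻ y in Ioi (0 : ℝ), ENNReal.ofReal (y ^ (n - 1)) * f y :=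
          lintegral_subtype_comap measurableSet_Ioi
            fun y => ENNReal.ofReal (y ^ (n - 1)) * f y
  rw [h1, h2, h3, h4]
  exact ENNReal.mul_lt_top hfin (measure_lt_top _ _)

theorem integrable_rpow_one_sub_tanh_rpow (n : ℕ) (hn : 1 ≤ n) (α β : ℝ)
    (hα : 0 < α) (hαβ : 0 < α + β) (hβ : -(n : ℝ) < β) :
    Integrable (fun x : EuclideanSpace ℝ (Fin n) =>
      ‖x‖ ^ β * (1 - Real.tanh ‖x‖ ^ α)) := by
  set a := min α 1 with ha_def
  have ha0 : 0 < a := lt_min hα one_pos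
  have ha1 : a ≤ 1 := min_le_right _ _
  set C : ℝ := (1 + α) * 2 ^ a with hC
  have hC0 : 0 < C := by positivity
  -- basic facts about tanh
  have tanh_mem : ∀ r : ℝ, 0 ≤ r → 0 ≤ Real.tanh r ∧ Real.tanh r ≤ 1 := by
    intro r hr
    rw [Real.tanh_eq_sinh_div_cosh]
    constructor
    · exact div_nonneg (Real.sinh_nonneg_iff.2 hr) (Real.cosh_pos r).le
    · rw [div_le_one (Real.cosh_pos r)]
      exact (Real.sinh_lt_cosh r).le
  have hF0 : ∀ r : ℝ, 0 ≤ r → 0 ≤ 1 - Real.tanh r ^ α := by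
    intro r hr
    obtain ⟨h0, h1⟩ := tanh_mem r hr
    have : Real.tanh r ^ α ≤ 1 := Real.rpow_le_one h0 h1 hα.le
    linarith
  -- the exponential decay bound
  have hexp : ∀ r : ℝ, 0 ≤ r → 1 - Real.tanh r ^ α ≤ C * Real.exp (-(2 * a) * r) := by
    intro r hr
    obtain ⟨ht0, ht1⟩ := tanh_mem r hr
    have h1t0 : 0 ≤ 1 - Real.tanh r := by linarith
    have step1 : 1 - Real.tanh r ^ α ≤ (1 + α) * (1 - Real.tanh r) ^ a := by
      rcases le_or_gt α 1 with hle | hgt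
      · have haα : a = α := min_eq_left hle
        rw [haα]
        have h2 : Real.tanh r ≤ Real.tanh r ^ α := by
          rcases eq_or_lt_of_le ht0 with h0 | h0
          · rw [← h0, Real.zero_rpow hα.ne']
          · calc Real.tanh r = Real.tanh r ^ (1 : ℝ) := (Real.rpow_one _).symm
              _ ≤ Real.tanh r ^ α := Real.rpow_le_rpow_of_exponent_ge h0 ht1 hle
        have h3 : 1 - Real.tanh r ≤ (1 - Real.tanh r) ^ α := by
          rcases eq_or_lt_of_le h1t0 with h0 | h0
          · rw [← h0, Real.zero_rpow hα.ne']
          · calc 1 - Real.tanh r = (1 - Real.tanh r) ^ (1 : ℝ) := (Real.rpow_one _).symm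
              _ ≤ (1 - Real.tanh r) ^ α :=
                Real.rpow_le_rpow_of_exponent_ge h0 (by linarith) hle
        nlinarith [Real.rpow_nonneg h1t0 α]
      · have haα : a = 1 := min_eq_right hgt.le
        rw [haα, Real.rpow_one]
        have hb : 1 + α * (Real.tanh r - 1) ≤ (1 + (Real.tanh r - 1)) ^ α :=
          one_add_mul_self_le_rpow_one_add (by linarith) hgt.le
        have he : (1 + (Real.tanh r - 1)) = Real.tanh r := by ring
        rw [he] at hb
        nlinarith
    have step2 : 1 - Real.tanh r ≤ 2 * Real.exp (-(2 * r)) := by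
      have hcosh := Real.cosh_pos r
      have key : 1 - Real.tanh r = Real.exp (-r) / Real.cosh r := by
        rw [Real.tanh_eq_sinh_div_cosh, ← Real.cosh_sub_sinh r]
        field_simp
      rw [key, div_le_iff₀ hcosh, Real.cosh_eq]
      have e1 : Real.exp (-(2 * r)) * Real.exp r = Real.exp (-r) := by
        rw [← Real.exp_add]; ring_nf
      have e2 : 0 < Real.exp (-(2 * r)) * Real.exp (-r) :=
        mul_pos (Real.exp_pos _) (Real.exp_pos _)
      nlinarith
    have step3 : (1 - Real.tanh r) ^ a ≤ 2 ^ a * Real.exp (-(2 * a) * r) := by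
      have s3 : (1 - Real.tanh r) ^ a ≤ (2 * Real.exp (-(2 * r))) ^ a :=
        Real.rpow_le_rpow h1t0 step2 ha0.le
      have s4 : (2 * Real.exp (-(2 * r))) ^ a = 2 ^ a * Real.exp (-(2 * a) * r) := by
        rw [Real.mul_rpow (by norm_num) (Real.exp_pos _).le, ← Real.exp_mul]
        ring_nf
      rw [← s4]; exact s3
    calc 1 - Real.tanh r ^ α ≤ (1 + α) * (1 - Real.tanh r) ^ a := step1
      _ ≤ (1 + α) * (2 ^ a * Real.exp (-(2 * a) * r)) := by
          have := mul_le_mul_of_nonneg_left step3 (by linarith : (0:ℝ) ≤ 1 + α)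
          linarith
      _ = C * Real.exp (-(2 * a) * r) := by rw [hC]; ring
  -- measurability
  have hmf : Measurable fun r : ℝ => r ^ β * (1 - Real.tanh r ^ α) := by
    have htanh : Continuous Real.tanh := by
      simp only [funext Real.tanh_eq_sinh_div_cosh]
      exact Real.continuous_sinh.div Real.continuous_cosh fun x => (Real.cosh_pos x).ne'
    fun_prop
  -- the 1D majorant
  have hs' : (-1 : ℝ) < ((n - 1 : ℕ) : ℝ) + β := by
    have : ((n - 1 : ℕ) : ℝ) = (n : ℝ) - 1 := by
      rw [Nat.cast_sub hn]; norm_num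
    rw [this]; linarith
  have hb0 : (0 : ℝ) < 2 * a := by linarith
  have hint : IntegrableOn
      (fun y : ℝ => C * (y ^ (((n - 1 : ℕ) : ℝ) + β) * Real.exp (-(2 * a) * y)))
      (Ioi (0 : ℝ)) := by
    have := integrableOn_rpow_mul_exp_neg_mul_rpow
      (p := 1) (s := ((n - 1 : ℕ) : ℝ) + β) (b := 2 * a) hs' one_pos hb0
    simp only [Real.rpow_one] at this
    exact this.const_mul C
  -- assemble integrability
  refine ⟨(hmf.comp measurable_norm).aestronglyMeasurable, ?_⟩
  have hnn : ∀ x : EuclideanSpace ℝ (Fin n), 0 ≤ ‖x‖ ^ β * (1 - Real.tanh ‖x‖ ^ α) :=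
    fun x => mul_nonneg (Real.rpow_nonneg (norm_nonneg x) β) (hF0 _ (norm_nonneg x))
  rw [hasFiniteIntegral_iff_norm]
  have hrw : ∀ x : EuclideanSpace ℝ (Fin n),
      ENNReal.ofReal ‖‖x‖ ^ β * (1 - Real.tanh ‖x‖ ^ α)‖
        = (fun r : ℝ => ENNReal.ofReal (r ^ β * (1 - Real.tanh r ^ α))) ‖x‖ := fun x => by
    rw [Real.norm_of_nonneg (hnn x)]
  simp only [hrw]
  apply radial_lintegral_lt_top_aux n hn _ (hmf.ennreal_ofReal)
  have hmono : ∫⁻ y in Ioi (0 : ℝ),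
        ENNReal.ofReal (y ^ (n - 1)) * ENNReal.ofReal (y ^ β * (1 - Real.tanh y ^ α))
      ≤ ∫⁻ y in Ioi (0 : ℝ),
        ENNReal.ofReal (C * (y ^ (((n - 1 : ℕ) : ℝ) + β) * Real.exp (-(2 * a) * y))) := by
    refine setLIntegral_mono' measurableSet_Ioi fun y hy => ?_
    have hy0 : (0 : ℝ) < y := hy
    rw [← ENNReal.ofReal_mul (by positivity)]
    apply ENNReal.ofReal_le_ofReal
    have hpow : (y : ℝ) ^ (n - 1) * y ^ β = y ^ (((n - 1 : ℕ) : ℝ) + β) := by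
      rw [← Real.rpow_natCast y (n - 1), ← Real.rpow_add hy0]
    calc y ^ (n - 1) * (y ^ β * (1 - Real.tanh y ^ α))
        ≤ y ^ (n - 1) * (y ^ β * (C * Real.exp (-(2 * a) * y))) := by
          apply mul_le_mul_of_nonneg_left _ (by positivity)
          exact mul_le_mul_of_nonneg_left (hexp y hy0.le)
            (Real.rpow_nonneg hy0.le β)
      _ = C * (y ^ (((n - 1 : ℕ) : ℝ) + β) * Real.exp (-(2 * a) * y)) := by
          rw [← hpow]; ring
  exact lt_of_le_of_lt hmono hint.setLIntegral_lt_top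
end
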